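/- For a word ν of length n > 1 admissible in X_A and a nonempty open set V ⊆ X_A not contained in the cylinder U_ν, there exists α ∈ Γ_A with α(U_ν) ⊆ V, α² = id, and α equal to the identity outside U_ν ∪ α(U_ν). -/

import Mathlib

open Set

instance homeoGroup {α : Type*} [TopologicalSpace α] : Group (α ≃ₜ α) where
  mul a b := b.trans a
  one := Homeomorph.refl α
  inv := Homeomorph.symm
  mul_assoc _ _ _ := Homeomorph.ext fun _ => rfl
  one_mul _ := Homeomorph.ext fun _ => rfl
  mul_one _ := Homeomorph.ext fun _ => rfl
  inv_mul_cancel a := Homeomorph.ext fun x => a.symm_apply_apply x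

@[simp] theorem homeo_mul_apply {α : Type*} [TopologicalSpace α] (a b : α ≃ₜ α) (x : α) :
    (a * b) x = a (b x) := rfl

@[simp] theorem homeo_inv_apply {α : Type*} [TopologicalSpace α] (a : α ≃ₜ α) (x : α) :
    a⁻¹ x = a.symm x := rfl

/-- The one-sided shift space `X_A` of a 0-1 matrix `A`. -/
abbrev ShiftSpace {N : ℕ} (A : Fin N → Fin N → Bool) : Type :=
  {x : ℕ → Fin N // ∀ n, A (x n) (x (n + 1)) = true}

/-- The one-sided shift `σ_A`. -/
def shiftMap {N : ℕ} (A : Fin N → Fin N → Bool) (x : ShiftSpace A) : ShiftSpace A :=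
  ⟨fun n => x.1 (n + 1), fun n => x.2 (n + 1)⟩

/-- Irreducibility of the matrix `A`: any two indices are connected by a path. -/
def MatrixIrreducible {N : ℕ} (A : Fin N → Fin N → Bool) : Prop :=
  ∀ i j : Fin N, ∃ n : ℕ, 0 < n ∧ ∃ w : ℕ → Fin N, w 0 = i ∧ w n = j ∧
    ∀ k < n, A (w k) (w (k + 1)) = true

/-- Condition (I): the shift space is homeomorphic to the Cantor set. -/
def ConditionI {N : ℕ} (A : Fin N → Fin N → Bool) : Prop :=
  Nonempty (ShiftSpace A ≃ₜ (ℕ → Bool))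

/-- The continuous full group `Γ_A`. -/
def fullGroup {N : ℕ} (A : Fin N → Fin N → Bool) :
    Subgroup (ShiftSpace A ≃ₜ ShiftSpace A) where
  carrier := {τ | ∃ k l : ShiftSpace A → ℕ, Continuous k ∧ Continuous l ∧
    ∀ x, (shiftMap A)^[k x] (τ x) = (shiftMap A)^[l x] x}
  one_mem' := ⟨fun _ => 0, fun _ => 0, continuous_const, continuous_const, fun _ => rfl⟩
  mul_mem' := by
    rintro a b ⟨k1, l1, hk1, hl1, h1⟩ ⟨k2, l2, hk2, hl2, h2⟩
    refine ⟨fun x => k2 x + k1 (b x), fun x => l1 (b x) + l2 x,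
      hk2.add (hk1.comp b.continuous), (hl1.comp b.continuous).add hl2, fun x => ?_⟩
    calc (shiftMap A)^[k2 x + k1 (b x)] ((a * b) x)
        = (shiftMap A)^[k2 x] ((shiftMap A)^[k1 (b x)] (a (b x))) :=
          Function.iterate_add_apply _ _ _ _
      _ = (shiftMap A)^[k2 x] ((shiftMap A)^[l1 (b x)] (b x)) := by rw [h1]
      _ = (shiftMap A)^[l1 (b x)] ((shiftMap A)^[k2 x] (b x)) := by
          rw [← Function.iterate_add_apply, Nat.add_comm, Function.iterate_add_apply]
      _ = (shiftMap A)^[l1 (b x)] ((shiftMap A)^[l2 x] x) := by rw [h2]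
      _ = (shiftMap A)^[l1 (b x) + l2 x] x := (Function.iterate_add_apply _ _ _ _).symm
  inv_mem' := by
    rintro a ⟨k, l, hk, hl, h⟩
    refine ⟨fun x => l (a⁻¹ x), fun x => k (a⁻¹ x),
      hl.comp a.symm.continuous, hk.comp a.symm.continuous, fun x => ?_⟩
    have := (h (a⁻¹ x)).symm
    rwa [show a (a⁻¹ x) = x from a.apply_symm_apply x] at this

/-- The local subgroup `Γ_O` of `Γ_A` associated to a set `O`. -/
def localGroup {N : ℕ} (A : Fin N → Fin N → Bool) (O : Set (ShiftSpace A)) :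
    Subgroup (ShiftSpace A ≃ₜ ShiftSpace A) where
  carrier := {γ | γ ∈ fullGroup A ∧ ∀ x ∉ O, γ x = x}
  one_mem' := ⟨(fullGroup A).one_mem, fun _ _ => rfl⟩
  mul_mem' := by
    rintro a b ⟨haΓ, ha⟩ ⟨hbΓ, hb⟩
    exact ⟨mul_mem haΓ hbΓ, fun x hx => by
      show a (b x) = x
      rw [hb x hx, ha x hx]⟩
  inv_mem' := by
    rintro a ⟨haΓ, ha⟩
    refine ⟨inv_mem haΓ, fun x hx => ?_⟩
    conv_lhs => rw [← ha x hx]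
    exact a.symm_apply_apply x

/-- The commutant in `Γ_A` of a set of homeomorphisms. -/
def commutant {N : ℕ} (A : Fin N → Fin N → Bool)
    (S : Set (ShiftSpace A ≃ₜ ShiftSpace A)) : Set (ShiftSpace A ≃ₜ ShiftSpace A) :=
  {ξ | ξ ∈ fullGroup A ∧ ∀ γ ∈ S, ξ * γ = γ * ξ}

/-- The support `P_γ` of a homeomorphism `γ`. -/
def suppHomeo {N : ℕ} {A : Fin N → Fin N → Bool} (γ : ShiftSpace A ≃ₜ ShiftSpace A) :
    Set (ShiftSpace A) :=
  closure {x | γ x ≠ x}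

/-- The support `P_H` of a set of homeomorphisms. -/
def suppSet {N : ℕ} {A : Fin N → Fin N → Bool} (H : Set (ShiftSpace A ≃ₜ ShiftSpace A)) :
    Set (ShiftSpace A) :=
  closure (⋃ η ∈ H, interior (suppHomeo η))


theorem stmt9 {N : ℕ} (hN : 1 < N) (A : Fin N → Fin N → Bool)
    (hA : MatrixIrreducible A) (hI : ConditionI A)
    (n : ℕ) (hn : 1 < n) (ν : Fin n → Fin N)
    (hadm : ∃ x : ShiftSpace A, ∃ m : ℕ, ∀ i : Fin n, x.1 (m + i) = ν i)
    (V : Set (ShiftSpace A)) (hV : IsOpen V) (hVne : V.Nonempty)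
    (hVν : ¬ V ⊆ {x : ShiftSpace A | ∀ i : Fin n, x.1 i = ν i}) :
    ∃ α ∈ fullGroup A,
      α '' {x : ShiftSpace A | ∀ i : Fin n, x.1 i = ν i} ⊆ V ∧ α * α = 1 ∧
      ∀ x ∉ {x : ShiftSpace A | ∀ i : Fin n, x.1 i = ν i} ∪
          α '' {x : ShiftSpace A | ∀ i : Fin n, x.1 i = ν i}, α x = x := by
  
  classical
  set Uv : Set (ShiftSpace A) := {x : ShiftSpace A | ∀ i : Fin n, x.1 i = ν i} with hUv
  -- a point of V outside the cylinder
  obtain ⟨z, hzV, hzU⟩ := Set.not_subset.mp hVν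
  rw [hUv] at hzU
  simp only [Set.mem_setOf_eq] at hzU
  obtain ⟨i₀, hi₀⟩ := not_forall.mp hzU
  -- a basic open cylinder around z inside V
  obtain ⟨W, hWopen, hWV⟩ := isOpen_induced_iff.mp hV
  have hz1W : z.1 ∈ W := by rw [← hWV] at hzV; exact hzV
  obtain ⟨I, usets, hIu, hpiW⟩ := isOpen_pi_iff.mp hWopen z.1 hz1W
  set m := max (I.sup id + 1) n with hm
  have hnm : n ≤ m := le_max_right _ _
  have hsupm : I.sup id + 1 ≤ m := le_max_left _ _
  have hIm : ∀ i ∈ I, i < m := by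
    intro i hi
    have h1 : i ≤ I.sup id := by simpa using Finset.le_sup (f := id) hi
    omega
  have hcylV : ∀ y : ShiftSpace A, (∀ i, i < m → y.1 i = z.1 i) → y ∈ V := by
    intro y hy
    rw [← hWV]
    apply hpiW
    intro i hi
    have hiI : i ∈ I := hi
    change usets i (y.1 i)
    rw [hy i (hIm i hiI)]
    exact (hIu i hiI).2
  have h0n : 0 < n := by omega
  -- path from z (m-1) to ν 0
  obtain ⟨p, hp, w, hw0, hwp, hwadj⟩ := hA (z.1 (m - 1)) (ν ⟨0, h0n⟩)
  set L := m + p - 1 with hL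
  have hmL : m ≤ L := by omega
  set u' : ℕ → Fin N := fun i => if i < m then z.1 i else w (i - m + 1) with hu'
  -- the prepended sequence is admissible
  have hseq : ∀ x : ShiftSpace A, x ∈ Uv → ∀ k,
      A (if k < L then u' k else x.1 (k - L))
        (if k + 1 < L then u' (k + 1) else x.1 (k + 1 - L)) = true := by
    intro x hx k
    have hxU := hx
    rw [hUv] at hxU
    have hx0 : x.1 0 = w p := by
      have h := hxU ⟨0, h0n⟩
      rw [hwp]
      exact h
    by_cases h1 : k + 1 < L
    · rw [if_pos (by omega), if_pos h1]
      simp only [hu']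
      by_cases h2 : k + 1 < m
      · rw [if_pos (by omega : k < m), if_pos h2]
        exact z.2 k
      · by_cases h3 : k < m
        · rw [if_pos h3, if_neg (by omega)]
          have hk : k = m - 1 := by omega
          have he : k + 1 - m + 1 = 1 := by omega
          rw [he, hk, ← hw0]
          exact hwadj 0 hp
        · rw [if_neg h3, if_neg (by omega)]
          have he : k + 1 - m + 1 = (k - m + 1) + 1 := by omega
          rw [he]
          exact hwadj (k - m + 1) (by omega)
    · by_cases h4 : k < L
      · rw [if_pos h4, if_neg h1]
        have hk1 : k + 1 - L = 0 := by omega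
        rw [hk1, hx0]
        simp only [hu']
        by_cases h3 : k < m
        · rw [if_pos h3]
          have hp1 : p = 1 := by omega
          have hk : k = m - 1 := by omega
          rw [hk, ← hw0, hp1]
          exact hwadj 0 hp
        · rw [if_neg h3]
          have he : k - m + 1 = p - 1 := by omega
          rw [he]
          have h5 := hwadj (p - 1) (by omega)
          rw [show p - 1 + 1 = p by omega] at h5
          exact h5
      · rw [if_neg h4, if_neg h1]
        rw [show k + 1 - L = (k - L) + 1 by omega]
        exact x.2 (k - L)
  -- shift iteration coordinates
  have hiter : ∀ (k : ℕ) (x : ShiftSpace A) (i : ℕ),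
      ((shiftMap A)^[k] x).1 i = x.1 (i + k) := by
    intro k
    induction k with
    | zero => intro x i; rfl
    | succ k ih =>
      intro x i
      rw [Function.iterate_succ_apply, ih]
      rfl
  -- a fixed point of the cylinder
  obtain ⟨xw, mw, hxw⟩ := hadm
  have hx0mem : (shiftMap A)^[mw] xw ∈ Uv := by
    rw [hUv]
    intro i
    rw [hiter, Nat.add_comm]
    exact hxw i
  set hret : ShiftSpace A → ShiftSpace A :=
    Uv.piecewise (fun x => x) (fun _ => (shiftMap A)^[mw] xw) with hh
  have hretmem : ∀ x, hret x ∈ Uv := by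
    intro x
    by_cases hx : x ∈ Uv
    · rwa [hh, Set.piecewise_eq_of_mem _ _ _ hx]
    · rw [hh, Set.piecewise_eq_of_notMem _ _ _ hx]
      exact hx0mem
  have hretU : ∀ x ∈ Uv, hret x = x := fun x hx => by
    rw [hh, Set.piecewise_eq_of_mem _ _ _ hx]
  set prepend : ShiftSpace A → ShiftSpace A := fun x =>
    ⟨fun i => if i < L then u' i else (hret x).1 (i - L),
      hseq (hret x) (hretmem x)⟩ with hprep
  have hprep1 : ∀ x i, (prepend x).1 i
      = if i < L then u' i else (hret x).1 (i - L) := by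
    intro x i
    rw [hprep]
  set C : Set (ShiftSpace A) :=
    {y : ShiftSpace A | (∀ i, i < L → y.1 i = u' i) ∧ ∀ i : Fin n, y.1 (L + i) = ν i}
    with hC
  have hprepC : ∀ x ∈ Uv, prepend x ∈ C := by
    intro x hx
    rw [hC]
    constructor
    · intro i hi
      rw [hprep1, if_pos hi]
    · intro i
      rw [hprep1, if_neg (by omega : ¬ L + (i : ℕ) < L), hretU x hx,
        show L + (i : ℕ) - L = (i : ℕ) by omega]
      have hxU := hx
      rw [hUv] at hxU
      exact hxU i
  have hC_notU : ∀ y ∈ C, y ∉ Uv := by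
    intro y hy hyU
    rw [hC] at hy
    rw [hUv] at hyU
    apply hi₀
    have h1 := hy.1 (i₀ : ℕ) (by have := i₀.2; omega)
    simp only [hu'] at h1
    rw [if_pos (by have := i₀.2; omega : (i₀ : ℕ) < m)] at h1
    rw [← h1]
    exact hyU i₀
  have hshiftL_mem : ∀ y ∈ C, (shiftMap A)^[L] y ∈ Uv := by
    intro y hy
    rw [hC] at hy
    rw [hUv]
    intro i
    rw [hiter, Nat.add_comm]
    exact hy.2 i
  have hprep_shift : ∀ x ∈ Uv, (shiftMap A)^[L] (prepend x) = x := by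
    intro x hx
    apply Subtype.ext
    funext i
    rw [hiter, hprep1, if_neg (by omega : ¬ i + L < L), hretU x hx,
      Nat.add_sub_cancel]
  have hC_prep : ∀ y ∈ C, prepend ((shiftMap A)^[L] y) = y := by
    intro y hy
    have hm2 := hshiftL_mem y hy
    apply Subtype.ext
    funext i
    rw [hprep1]
    rw [hC] at hy
    by_cases hi : i < L
    · rw [if_pos hi]
      exact (hy.1 i hi).symm
    · rw [if_neg hi, hretU _ hm2, hiter, show i - L + L = i by omega]
  have hCV : ∀ y ∈ C, y ∈ V := by
    intro y hy
    rw [hC] at hy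
    apply hcylV
    intro i hi
    rw [hy.1 i (by omega)]
    simp only [hu']
    rw [if_pos hi]
  -- the involution
  set f : ShiftSpace A → ShiftSpace A :=
    Uv.piecewise prepend (C.piecewise ((shiftMap A)^[L]) (fun x => x)) with hfdef
  have hfU : ∀ x ∈ Uv, f x = prepend x := fun x hx => by
    rw [hfdef, Set.piecewise_eq_of_mem _ _ _ hx]
  have hfC : ∀ y ∈ C, f y = (shiftMap A)^[L] y := fun y hy => by
    rw [hfdef, Set.piecewise_eq_of_notMem _ _ _ (hC_notU y hy),
      Set.piecewise_eq_of_mem _ _ _ hy]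
  have hfid : ∀ x, x ∉ Uv → x ∉ C → f x = x := fun x hx hc => by
    rw [hfdef, Set.piecewise_eq_of_notMem _ _ _ hx,
      Set.piecewise_eq_of_notMem _ _ _ hc]
  have hff : ∀ x, f (f x) = x := by
    intro x
    by_cases hx : x ∈ Uv
    · rw [hfU x hx, hfC _ (hprepC x hx)]
      exact hprep_shift x hx
    · by_cases hc : x ∈ C
      · rw [hfC x hc, hfU _ (hshiftL_mem x hc)]
        exact hC_prep x hc
      · rw [hfid x hx hc, hfid x hx hc]
  -- clopen sets
  have hUclopen : IsClopen Uv := by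
    have he : Uv = ⋂ i : Fin n, {x : ShiftSpace A | x.1 i = ν i} := by
      rw [hUv]
      ext x
      simp [Set.mem_iInter]
    rw [he]
    exact isClopen_iInter_of_finite fun i =>
      (isClopen_discrete {ν i}).preimage
        ((continuous_apply ((i : ℕ))).comp continuous_subtype_val)
  have hCclopen : IsClopen C := by
    have he : C = (⋂ i : Fin L, {y : ShiftSpace A | y.1 i = u' i}) ∩
        ⋂ i : Fin n, {y : ShiftSpace A | y.1 (L + i) = ν i} := by
      rw [hC]
      ext y
      simp only [Set.mem_setOf_eq, Set.mem_inter_iff, Set.mem_iInter]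
      constructor
      · rintro ⟨h1, h2⟩
        exact ⟨fun i => h1 i i.2, h2⟩
      · rintro ⟨h1, h2⟩
        exact ⟨fun i hi => h1 ⟨i, hi⟩, h2⟩
    rw [he]
    refine IsClopen.inter (isClopen_iInter_of_finite fun i => ?_)
      (isClopen_iInter_of_finite fun i => ?_)
    · exact (isClopen_discrete {u' (i : ℕ)}).preimage
        ((continuous_apply ((i : ℕ))).comp continuous_subtype_val)
    · exact (isClopen_discrete {ν i}).preimage
        ((continuous_apply (L + (i : ℕ))).comp continuous_subtype_val)
  -- continuity
  have hshiftc : Continuous (shiftMap A) := by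
    apply Continuous.subtype_mk
    exact continuous_pi fun k => (continuous_apply (k + 1)).comp continuous_subtype_val
  have hretc : Continuous hret := by
    rw [hh]
    refine Continuous.piecewise ?_ continuous_id continuous_const
    rw [hUclopen.frontier_eq]
    intro a ha
    exact absurd ha (Set.notMem_empty a)
  have hprepc : Continuous prepend := by
    rw [hprep]
    refine Continuous.subtype_mk (continuous_pi fun i => ?_) _
    by_cases hi : i < L
    · simpa [hi] using (continuous_const : Continuous fun _ : ShiftSpace A => u' i)
    · simp only [hi, if_false]
      exact ((continuous_apply (i - L)).comp continuous_subtype_val).comp hretc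
  have hfc : Continuous f := by
    rw [hfdef]
    refine Continuous.piecewise ?_ hprepc (Continuous.piecewise ?_ (hshiftc.iterate L) continuous_id)
    · rw [hUclopen.frontier_eq]
      intro a ha
      exact absurd ha (Set.notMem_empty a)
    · rw [hCclopen.frontier_eq]
      intro a ha
      exact absurd ha (Set.notMem_empty a)
  -- image of the cylinder is C
  have himgC : ∀ y ∈ C, ∃ x ∈ Uv, f x = y := by
    intro y hy
    refine ⟨(shiftMap A)^[L] y, hshiftL_mem y hy, ?_⟩
    rw [hfU _ (hshiftL_mem y hy)]
    exact hC_prep y hy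
  -- membership in the full group
  have hmemfull : ∀ β : ShiftSpace A ≃ₜ ShiftSpace A, ⇑β = f → β ∈ fullGroup A := by
    intro β hβ
    refine ⟨Uv.piecewise (fun _ => L) (fun _ => 0),
      C.piecewise (fun _ => L) (fun _ => 0), ?_, ?_, ?_⟩
    · refine Continuous.piecewise ?_ continuous_const continuous_const
      rw [hUclopen.frontier_eq]
      intro a ha
      exact absurd ha (Set.notMem_empty a)
    · refine Continuous.piecewise ?_ continuous_const continuous_const
      rw [hCclopen.frontier_eq]
      intro a ha
      exact absurd ha (Set.notMem_empty a)
    · intro x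
      rw [show β x = f x from congrFun hβ x]
      by_cases hx : x ∈ Uv
      · have hxc : x ∉ C := fun hc => hC_notU x hc hx
        rw [Set.piecewise_eq_of_mem _ _ _ hx, Set.piecewise_eq_of_notMem _ _ _ hxc,
          hfU x hx]
        exact hprep_shift x hx
      · by_cases hc : x ∈ C
        · rw [Set.piecewise_eq_of_notMem _ _ _ hx, Set.piecewise_eq_of_mem _ _ _ hc,
            hfC x hc]
          rfl
        · rw [Set.piecewise_eq_of_notMem _ _ _ hx, Set.piecewise_eq_of_notMem _ _ _ hc,
            hfid x hx hc]
  refine ⟨⟨⟨f, f, hff, hff⟩, hfc, hfc⟩, hmemfull _ rfl, ?_, ?_, ?_⟩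
  · rintro y ⟨x, hx, rfl⟩
    show f x ∈ V
    rw [hfU x hx]
    exact hCV _ (hprepC x hx)
  · exact Homeomorph.ext fun x => hff x
  · intro x hx
    have hx1 : x ∉ Uv := fun h => hx (Or.inl h)
    have hx2 : x ∉ C := by
      intro hc
      obtain ⟨x', hx', hfx'⟩ := himgC x hc
      exact hx (Or.inr ⟨x', hx', hfx'⟩)
    exact hfid x hx1 hx2
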